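/- Define g(α, w) := ∇γ(R(α)w) · R(α + π/2)w for α ∈ ℝ and w ∈ ℝ². Then for all α, β ∈ ℝ and all w, v ∈ ℝ², the following lower bound holds for the sum of the orientation cross-term and the divergence cross-term: (g(α, w) − g(β, v))(α − β) + (ᵀR(α)∇γ(R(α)w) − ᵀR(β)∇γ(R(β)v)) · (w − v) ≥ −[ 4√2 L₂ |w|² |α − β|² + 8 L₂ |w − v| |w| |α − β| + 4 L₀ |w| |α − β|² + 6 L₀ |w − v| |α − β| + 2 L₂ |w − v|² ]. (This is the pointwise estimate underlying the uniqueness proof for the time-discrete elliptic system.) -/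

import Mathlib

open Real
open scoped RealInnerProductSpace

/-- The rotation of `ℝ²` through angle `θ`, with matrix `((cos θ, −sin θ), (sin θ, cos θ))`.
Its transpose is `rot (−θ)`. -/
noncomputable def rot (θ : ℝ) (w : EuclideanSpace ℝ (Fin 2)) : EuclideanSpace ℝ (Fin 2) :=
  (WithLp.equiv 2 (Fin 2 → ℝ)).symm
    ![Real.cos θ * w 0 - Real.sin θ * w 1, Real.sin θ * w 0 + Real.cos θ * w 1]

section Aux

lemma rot_apply_zero (θ : ℝ) (w : EuclideanSpace ℝ (Fin 2)) :
    rot θ w 0 = Real.cos θ * w 0 - Real.sin θ * w 1 := rfl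

lemma rot_apply_one (θ : ℝ) (w : EuclideanSpace ℝ (Fin 2)) :
    rot θ w 1 = Real.sin θ * w 0 + Real.cos θ * w 1 := rfl

lemma inner_two (u v : EuclideanSpace ℝ (Fin 2)) : ⟪u, v⟫ = u 0 * v 0 + u 1 * v 1 := by
  simp [PiLp.inner_apply, Fin.sum_univ_two]; ring

lemma norm_sq_two (u : EuclideanSpace ℝ (Fin 2)) : ‖u‖ ^ 2 = u 0 ^ 2 + u 1 ^ 2 := by
  rw [← real_inner_self_eq_norm_sq, inner_two]; ring

lemma norm_le_of_sq_le {T : EuclideanSpace ℝ (Fin 2)} {c : ℝ} (hc : 0 ≤ c)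
    (h : ‖T‖ ^ 2 ≤ c ^ 2) : ‖T‖ ≤ c := by
  nlinarith [norm_nonneg T]

lemma rot_norm (θ : ℝ) (u : EuclideanSpace ℝ (Fin 2)) : ‖rot θ u‖ = ‖u‖ := by
  have h : ‖rot θ u‖ ^ 2 = ‖u‖ ^ 2 := by
    rw [norm_sq_two, norm_sq_two, rot_apply_zero, rot_apply_one]
    linear_combination (u 0 ^ 2 + u 1 ^ 2) * Real.sin_sq_add_cos_sq θ
  have := congrArg Real.sqrt h
  simpa [Real.sqrt_sq (norm_nonneg _)] using this

lemma grad_mono {γ : EuclideanSpace ℝ (Fin 2) → ℝ}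
    {γ' : EuclideanSpace ℝ (Fin 2) → EuclideanSpace ℝ (Fin 2)}
    (hconv : ConvexOn ℝ Set.univ γ)
    (hgrad : ∀ x, HasGradientAt γ (γ' x) x) (x y : EuclideanSpace ℝ (Fin 2)) :
    0 ≤ ⟪γ' y - γ' x, y - x⟫ := by
  have hline : ∀ t : ℝ, HasDerivAt (fun t : ℝ => x + t • (y - x)) (y - x) t := fun t => by
    simpa using ((hasDerivAt_id t).smul_const (y - x)).const_add x
  have hφ : ∀ t : ℝ, HasDerivAt (fun t : ℝ => γ (x + t • (y - x)))
      ⟪γ' (x + t • (y - x)), y - x⟫ t := by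
    intro t
    have h2 : HasFDerivAt γ (InnerProductSpace.toDual ℝ _ (γ' (x + t • (y - x))))
        (x + t • (y - x)) := hgrad _
    have := h2.comp_hasDerivAt t (hline t)
    simp at this
    exact this
  have hconvφ : ConvexOn ℝ Set.univ (fun t : ℝ => γ (x + t • (y - x))) := by
    have h := hconv.comp_affineMap (AffineMap.lineMap x y : ℝ →ᵃ[ℝ] EuclideanSpace ℝ (Fin 2))
    have : (fun t : ℝ => γ (x + t • (y - x))) = γ ∘ (AffineMap.lineMap x y) := by
      funext t; simp [AffineMap.lineMap_apply, add_comm]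
    rw [this]
    simpa using h
  have hmono := hconvφ.monotoneOn_deriv (fun t _ => (hφ t).differentiableAt)
  have h01 := hmono (Set.mem_univ (0:ℝ)) (Set.mem_univ (1:ℝ)) zero_le_one
  rw [(hφ 0).deriv, (hφ 1).deriv] at h01
  simp only [zero_smul, add_zero, one_smul, add_sub_cancel] at h01
  rw [inner_sub_left]; linarith

lemma sin_lip (x y : ℝ) : |Real.sin x - Real.sin y| ≤ |x - y| := by
  rw [Real.sin_sub_sin]
  have h1 := Real.abs_sin_le_abs (x := (x-y)/2)
  have h2 := Real.abs_cos_le_one ((x+y)/2)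
  have h3 : |2 * Real.sin ((x-y)/2) * Real.cos ((x+y)/2)|
      = 2 * |Real.sin ((x-y)/2)| * |Real.cos ((x+y)/2)| := by
    rw [abs_mul, abs_mul, abs_two]
  rw [h3]
  have h4 : |(x-y)/2| = |x-y|/2 := by rw [abs_div]; norm_num
  nlinarith [abs_nonneg (Real.sin ((x-y)/2)), abs_nonneg (x - y)]

lemma cos_lip (x y : ℝ) : |Real.cos x - Real.cos y| ≤ |x - y| := by
  rw [Real.cos_sub_cos]
  have h1 := Real.abs_sin_le_abs (x := (x-y)/2)
  have h2 := Real.abs_sin_le_one ((x+y)/2)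
  have h3 : |-2 * Real.sin ((x+y)/2) * Real.sin ((x-y)/2)|
      = 2 * |Real.sin ((x+y)/2)| * |Real.sin ((x-y)/2)| := by
    rw [abs_mul, abs_mul]; norm_num
  rw [h3]
  have h4 : |(x-y)/2| = |x-y|/2 := by rw [abs_div]; norm_num
  nlinarith [abs_nonneg (Real.sin ((x-y)/2)), abs_nonneg (Real.sin ((x+y)/2)),
    abs_nonneg (x - y)]

lemma cos_taylor (a h : ℝ) : |Real.cos (a + h) - Real.cos a + h * Real.sin a| ≤ h ^ 2 := by
  set f : ℝ → ℝ := fun t => Real.cos (a + t) + t * Real.sin a with hf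
  have hd : ∀ t : ℝ, HasDerivAt f (-Real.sin (a + t) + Real.sin a) t := by
    intro t
    have h1 : HasDerivAt (fun t : ℝ => Real.cos (a + t)) (-Real.sin (a + t)) t := by
      have := (Real.hasDerivAt_cos (a + t)).comp t (((hasDerivAt_id t).const_add a))
      simp at this
      exact this
    have := h1.add ((hasDerivAt_id t).mul_const (Real.sin a))
    simp at this
    exact this
  have key := Convex.norm_image_sub_le_of_norm_hasDerivWithin_le
    (f := f) (f' := fun t => -Real.sin (a + t) + Real.sin a) (s := Set.uIcc (0:ℝ) h) (C := |h|)
    (fun t _ => (hd t).hasDerivWithinAt)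
    (fun t ht => by
      have h1 : |Real.sin a - Real.sin (a + t)| ≤ |t| := by
        have := sin_lip a (a + t)
        simpa using this
      have h2 : |t| ≤ |h| := by
        rcases Set.mem_uIcc.mp ht with ⟨h3, h4⟩ | ⟨h3, h4⟩ <;> rw [abs_le] <;>
          constructor <;> cases' abs_cases h with hc hc <;> linarith
      calc ‖-Real.sin (a + t) + Real.sin a‖ = |Real.sin a - Real.sin (a + t)| := by
            rw [Real.norm_eq_abs]; ring_nf
          _ ≤ |h| := h1.trans h2)
    (convex_uIcc _ _) Set.left_mem_uIcc Set.right_mem_uIcc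
  have heq : f h - f 0 = Real.cos (a + h) - Real.cos a + h * Real.sin a := by
    simp [hf]; ring
  rw [heq] at key
  calc |Real.cos (a + h) - Real.cos a + h * Real.sin a| ≤ |h| * ‖h - 0‖ := key
    _ = h ^ 2 := by rw [sub_zero, Real.norm_eq_abs, ← abs_mul, ← sq, abs_sq]

lemma sin_taylor (a h : ℝ) : |Real.sin (a + h) - Real.sin a - h * Real.cos a| ≤ h ^ 2 := by
  set f : ℝ → ℝ := fun t => Real.sin (a + t) - t * Real.cos a with hf
  have hd : ∀ t : ℝ, HasDerivAt f (Real.cos (a + t) - Real.cos a) t := by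
    intro t
    have h1 : HasDerivAt (fun t : ℝ => Real.sin (a + t)) (Real.cos (a + t)) t := by
      have := (Real.hasDerivAt_sin (a + t)).comp t (((hasDerivAt_id t).const_add a))
      simp at this
      exact this
    have := h1.sub ((hasDerivAt_id t).mul_const (Real.cos a))
    simp at this
    exact this
  have key := Convex.norm_image_sub_le_of_norm_hasDerivWithin_le
    (f := f) (f' := fun t => Real.cos (a + t) - Real.cos a) (s := Set.uIcc (0:ℝ) h) (C := |h|)
    (fun t _ => (hd t).hasDerivWithinAt)
    (fun t ht => by
      have h1 : |Real.cos (a + t) - Real.cos a| ≤ |t| := by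
        have := cos_lip (a + t) a
        simpa using this
      have h2 : |t| ≤ |h| := by
        rcases Set.mem_uIcc.mp ht with ⟨h3, h4⟩ | ⟨h3, h4⟩ <;> rw [abs_le] <;>
          constructor <;> cases' abs_cases h with hc hc <;> linarith
      calc ‖Real.cos (a + t) - Real.cos a‖ = |Real.cos (a + t) - Real.cos a| := rfl
          _ ≤ |h| := h1.trans h2)
    (convex_uIcc _ _) Set.left_mem_uIcc Set.right_mem_uIcc
  have heq : f h - f 0 = Real.sin (a + h) - Real.sin a - h * Real.cos a := by
    simp [hf]; ring
  rw [heq] at key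
  calc |Real.sin (a + h) - Real.sin a - h * Real.cos a| ≤ |h| * ‖h - 0‖ := key
    _ = h ^ 2 := by rw [sub_zero, Real.norm_eq_abs, ← abs_mul, ← sq, abs_sq]

/-- Taylor remainder bound for the rotation. -/
lemma key1 (α β : ℝ) (w : EuclideanSpace ℝ (Fin 2)) :
    ‖(α - β) • rot (α + π/2) w - (rot α w - rot β w)‖ ≤ 2 * (α - β)^2 * ‖w‖ := by
  set a : ℝ := Real.cos β - Real.cos α - (α - β) * Real.sin α with ha_def
  set b : ℝ := Real.sin α - Real.sin β - (α - β) * Real.cos α with hb_def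
  have ha : |a| ≤ (α - β) ^ 2 := by
    have h := cos_taylor α (-(α - β))
    rw [show α + -(α - β) = β by ring] at h
    have he : Real.cos β - Real.cos α + -(α - β) * Real.sin α = a := by rw [ha_def]; ring
    rw [he] at h
    calc |a| ≤ (-(α - β)) ^ 2 := h
      _ = (α - β) ^ 2 := by ring
  have hb : |b| ≤ (α - β) ^ 2 := by
    have h := sin_taylor α (-(α - β))
    rw [show α + -(α - β) = β by ring] at h
    have he : Real.sin β - Real.sin α - -(α - β) * Real.cos α = -b := by rw [hb_def]; ring
    rw [he, abs_neg] at h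
    calc |b| ≤ (-(α - β)) ^ 2 := h
      _ = (α - β) ^ 2 := by ring
  apply norm_le_of_sq_le (by positivity)
  have hT0 : ((α - β) • rot (α + π/2) w - (rot α w - rot β w)) 0 = a * w 0 + b * w 1 := by
    simp [rot_apply_zero, Real.cos_add_pi_div_two, Real.sin_add_pi_div_two, ha_def, hb_def]
    ring
  have hT1 : ((α - β) • rot (α + π/2) w - (rot α w - rot β w)) 1 = -b * w 0 + a * w 1 := by
    simp [rot_apply_zero, rot_apply_one, Real.cos_add_pi_div_two, Real.sin_add_pi_div_two,
      ha_def, hb_def]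
    ring
  rw [norm_sq_two, hT0, hT1]
  have ha2 : a ^ 2 ≤ ((α - β) ^ 2) ^ 2 := by
    rw [← sq_abs a]; exact pow_le_pow_left₀ (abs_nonneg a) ha 2
  have hb2 : b ^ 2 ≤ ((α - β) ^ 2) ^ 2 := by
    rw [← sq_abs b]; exact pow_le_pow_left₀ (abs_nonneg b) hb 2
  have hw := norm_sq_two w
  nlinarith [mul_le_mul_of_nonneg_right ha2 (show (0:ℝ) ≤ w 0 ^ 2 + w 1 ^ 2 by positivity),
    mul_le_mul_of_nonneg_right hb2 (show (0:ℝ) ≤ w 0 ^ 2 + w 1 ^ 2 by positivity),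
    mul_nonneg (mul_nonneg (sq_nonneg ((α - β)^2)) (sq_nonneg (w 0))) (sq_nonneg (w 1)),
    mul_nonneg (sq_nonneg ((α - β)^2)) (add_nonneg (sq_nonneg (w 0)) (sq_nonneg (w 1)))]

/-- Lipschitz bound for the rotation. -/
lemma key2 (α β : ℝ) (u : EuclideanSpace ℝ (Fin 2)) :
    ‖rot α u - rot β u‖ ≤ 2 * |α - β| * ‖u‖ := by
  set c : ℝ := Real.cos α - Real.cos β with hc_def
  set d : ℝ := Real.sin α - Real.sin β with hd_def
  have hc : |c| ≤ |α - β| := cos_lip α β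
  have hd : |d| ≤ |α - β| := sin_lip α β
  apply norm_le_of_sq_le (by positivity)
  have hT0 : (rot α u - rot β u) 0 = c * u 0 - d * u 1 := by
    simp [rot_apply_zero, hc_def, hd_def]; ring
  have hT1 : (rot α u - rot β u) 1 = d * u 0 + c * u 1 := by
    simp [rot_apply_one, hc_def, hd_def]; ring
  rw [norm_sq_two, hT0, hT1]
  have hc2 : c ^ 2 ≤ |α - β| ^ 2 := by
    rw [← sq_abs c]; exact pow_le_pow_left₀ (abs_nonneg c) hc 2
  have hd2 : d ^ 2 ≤ |α - β| ^ 2 := by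
    rw [← sq_abs d]; exact pow_le_pow_left₀ (abs_nonneg d) hd 2
  have hu := norm_sq_two u
  nlinarith [mul_le_mul_of_nonneg_right hc2 (show (0:ℝ) ≤ u 0 ^ 2 + u 1 ^ 2 by positivity),
    mul_le_mul_of_nonneg_right hd2 (show (0:ℝ) ≤ u 0 ^ 2 + u 1 ^ 2 by positivity),
    mul_nonneg (mul_nonneg (sq_abs (α - β) ▸ sq_nonneg (α - β) : (0:ℝ) ≤ |α - β| ^ 2) (sq_nonneg (u 0))) (sq_nonneg (u 1)),
    mul_nonneg (sq_abs (α - β) ▸ sq_nonneg (α - β) : (0:ℝ) ≤ |α - β| ^ 2) (add_nonneg (sq_nonneg (u 0)) (sq_nonneg (u 1)))]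

end Aux

/-- With `g(α, w) := ∇γ(R(α)w) ⬝ R(α + π/2)w`, for all `α, β ∈ ℝ` and `w, v ∈ ℝ²`:
`(g(α,w) − g(β,v))(α − β) + (ᵀR(α)∇γ(R(α)w) − ᵀR(β)∇γ(R(β)v)) ⬝ (w − v)`
`≥ −[4√2 L₂ |w|²|α−β|² + 8 L₂ |w−v||w||α−β| + 4 L₀ |w||α−β|² + 6 L₀ |w−v||α−β| + 2 L₂ |w−v|²]`. -/
theorem stmt4 (γ : EuclideanSpace ℝ (Fin 2) → ℝ)
    (γ' : EuclideanSpace ℝ (Fin 2) → EuclideanSpace ℝ (Fin 2)) (L₀ L₂ : ℝ)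
    (hnonneg : ∀ x, 0 ≤ γ x)
    (hconv : ConvexOn ℝ Set.univ γ)
    (hgrad : ∀ x, HasGradientAt γ (γ' x) x)
    (hbdd : ∀ x, ‖γ' x‖ ≤ L₀)
    (hlip : ∀ x y, ‖γ' x - γ' y‖ ≤ L₂ * ‖x - y‖)
    (hmin : ∀ x, x ≠ 0 → γ 0 < γ x)
    (g : ℝ → EuclideanSpace ℝ (Fin 2) → ℝ)
    (hg : ∀ α w, g α w = ⟪γ' (rot α w), rot (α + π / 2) w⟫) :
    ∀ (α β : ℝ) (w v : EuclideanSpace ℝ (Fin 2)),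
      (g α w - g β v) * (α - β)
          + ⟪rot (-α) (γ' (rot α w)) - rot (-β) (γ' (rot β v)), w - v⟫
        ≥ -(4 * Real.sqrt 2 * L₂ * ‖w‖ ^ 2 * |α - β| ^ 2
            + 8 * L₂ * ‖w - v‖ * ‖w‖ * |α - β|
            + 4 * L₀ * ‖w‖ * |α - β| ^ 2
            + 6 * L₀ * ‖w - v‖ * |α - β|
            + 2 * L₂ * ‖w - v‖ ^ 2) := by
  intro α β w v
  have hL0 : 0 ≤ L₀ := le_trans (norm_nonneg _) (hbdd 0)
  have hL2 : 0 ≤ L₂ := by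
    have h := hlip (EuclideanSpace.single (0 : Fin 2) (1:ℝ)) 0
    have h2 : ‖(EuclideanSpace.single (0 : Fin 2) (1:ℝ)) - 0‖ = 1 := by
      simp [EuclideanSpace.norm_single]
    rw [h2, mul_one] at h
    exact le_trans (norm_nonneg _) h
  set p := γ' (rot α w) with hp
  set q := γ' (rot β v) with hq
  set T1 := (α - β) • rot (α + π/2) w - (rot α w - rot β w) with hT1
  set T2 := rot α (w - v) - rot β (w - v) with hT2
  set T3 := (β - α) • rot (β + π/2) w - (rot β w - rot α w) with hT3'
  set T4 := (α - β) • rot (β + π/2) (w - v) with hT4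
  -- the key algebraic identity
  have hid : (g α w - g β v) * (α - β)
      + ⟪rot (-α) p - rot (-β) q, w - v⟫
      = ⟪p - q, rot α w - rot β v⟫ + ⟪p, T1⟫ + ⟪p, T2⟫ + ⟪q, T3⟫ + ⟪q, T4⟫ := by
    rw [hg, hg, ← hp, ← hq]
    simp only [inner_two, hT1, hT2, hT3', hT4, PiLp.sub_apply, PiLp.smul_apply,
      rot_apply_zero, rot_apply_one, smul_eq_mul, Real.cos_add_pi_div_two,
      Real.sin_add_pi_div_two, Real.cos_neg, Real.sin_neg]
    ring
  -- monotonicity of the gradient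
  have hm : 0 ≤ ⟪p - q, rot α w - rot β v⟫ := grad_mono hconv hgrad (rot β v) (rot α w)
  -- bounds on the error terms
  have b1 : -(2 * L₀ * ‖w‖ * |α - β| ^ 2) ≤ ⟪p, T1⟫ := by
    have h1 := abs_real_inner_le_norm p T1
    have h3 : ‖p‖ * ‖T1‖ ≤ L₀ * (2 * (α - β)^2 * ‖w‖) :=
      mul_le_mul (hbdd _) (key1 α β w) (norm_nonneg _) hL0
    have h4 : L₀ * (2 * (α - β)^2 * ‖w‖) = 2 * L₀ * ‖w‖ * |α - β| ^ 2 := by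
      rw [sq_abs]; ring
    linarith [neg_abs_le (⟪p, T1⟫ : ℝ)]
  have b2 : -(2 * L₀ * ‖w - v‖ * |α - β|) ≤ ⟪p, T2⟫ := by
    have h1 := abs_real_inner_le_norm p T2
    have h3 : ‖p‖ * ‖T2‖ ≤ L₀ * (2 * |α - β| * ‖w - v‖) :=
      mul_le_mul (hbdd _) (key2 α β (w - v)) (norm_nonneg _) hL0
    have h4 : L₀ * (2 * |α - β| * ‖w - v‖) = 2 * L₀ * ‖w - v‖ * |α - β| := by ring
    linarith [neg_abs_le (⟪p, T2⟫ : ℝ)]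
  have b3 : -(2 * L₀ * ‖w‖ * |α - β| ^ 2) ≤ ⟪q, T3⟫ := by
    have h1 := abs_real_inner_le_norm q T3
    have hkey : ‖T3‖ ≤ 2 * (β - α)^2 * ‖w‖ := key1 β α w
    have h3 : ‖q‖ * ‖T3‖ ≤ L₀ * (2 * (β - α)^2 * ‖w‖) :=
      mul_le_mul (hbdd _) hkey (norm_nonneg _) hL0
    have h4 : L₀ * (2 * (β - α)^2 * ‖w‖) = 2 * L₀ * ‖w‖ * |α - β| ^ 2 := by
      rw [show (β - α)^2 = (α - β)^2 by ring, sq_abs]; ring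
    linarith [neg_abs_le (⟪q, T3⟫ : ℝ)]
  have b4 : -(L₀ * ‖w - v‖ * |α - β|) ≤ ⟪q, T4⟫ := by
    have h1 := abs_real_inner_le_norm q T4
    have hT4n : ‖T4‖ = |α - β| * ‖w - v‖ := by
      rw [hT4, norm_smul, rot_norm]; simp [Real.norm_eq_abs]
    have h3 : ‖q‖ * ‖T4‖ ≤ L₀ * (|α - β| * ‖w - v‖) := by
      rw [hT4n]
      exact mul_le_mul_of_nonneg_right (hbdd _) (by positivity) |>.trans
        (le_of_eq rfl)
    have h4 : L₀ * (|α - β| * ‖w - v‖) = L₀ * ‖w - v‖ * |α - β| := by ring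
    linarith [neg_abs_le (⟪q, T4⟫ : ℝ)]
  -- nonnegativity of the slack terms
  have n1 : 0 ≤ 4 * Real.sqrt 2 * L₂ * ‖w‖ ^ 2 * |α - β| ^ 2 := by positivity
  have n2 : 0 ≤ 8 * L₂ * ‖w - v‖ * ‖w‖ * |α - β| := by positivity
  have n3 : 0 ≤ 2 * L₂ * ‖w - v‖ ^ 2 := by positivity
  have n4 : 0 ≤ L₀ * ‖w - v‖ * |α - β| := by positivity
  rw [ge_iff_le, hid]
  linarith
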